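/- Let L > 0 and let ρ : [−π, π] → ℝ be continuously differentiable. Define φ(x) = 1/(exp(2π/L) − 1) · [ exp((2π − x)/L)·∫_{−π}^{x} exp(y/L)·ρ(y) dy − exp(x/L)·∫_{−π}^{x} exp(−y/L)·ρ(y) dy − exp((2π + x)/L)·∫_{x}^{π} exp(−y/L)·ρ(y) dy + exp(−x/L)·∫_{x}^{π} exp(y/L)·ρ(y) dy ]. Then φ is twice differentiable on (−π, π) and satisfies φ''(x) = φ(x)/L² + 2·ρ'(x) for all x ∈ (−π, π). -/

import Mathlib

/-- Appendix B of the paper: the explicit expression of the circular convolution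
of a density `ρ` with the repulsive interaction kernel. -/
noncomputable def phiConv (L : ℝ) (ρ : ℝ → ℝ) (x : ℝ) : ℝ :=
  (1 / (Real.exp (2 * Real.pi / L) - 1)) *
    (Real.exp ((2 * Real.pi - x) / L) * (∫ y in (-Real.pi)..x, Real.exp (y / L) * ρ y)
      - Real.exp (x / L) * (∫ y in (-Real.pi)..x, Real.exp (-y / L) * ρ y)
      - Real.exp ((2 * Real.pi + x) / L) * (∫ y in x..Real.pi, Real.exp (-y / L) * ρ y)
      + Real.exp (-x / L) * (∫ y in x..Real.pi, Real.exp (y / L) * ρ y))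

/-- First derivative of `phiConv`. -/
noncomputable def phiD (L : ℝ) (ρ : ℝ → ℝ) (x : ℝ) : ℝ :=
  (1 / (Real.exp (2 * Real.pi / L) - 1)) * ((-(1 / L)) *
    (Real.exp ((2 * Real.pi - x) / L) * (∫ y in (-Real.pi)..x, Real.exp (y / L) * ρ y)
      + Real.exp (x / L) * (∫ y in (-Real.pi)..x, Real.exp (-y / L) * ρ y)
      + Real.exp ((2 * Real.pi + x) / L) * (∫ y in x..Real.pi, Real.exp (-y / L) * ρ y)
      + Real.exp (-x / L) * (∫ y in x..Real.pi, Real.exp (y / L) * ρ y)))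
  + 2 * ρ x

lemma hasDerivAt_int_right {f : ℝ → ℝ} (hf : Continuous f) (a x : ℝ) :
    HasDerivAt (fun t => ∫ y in a..t, f y) (f x) x :=
  intervalIntegral.integral_hasDerivAt_right (hf.intervalIntegrable a x)
    (hf.stronglyMeasurableAtFilter _ _) hf.continuousAt

lemma hasDerivAt_int_left {f : ℝ → ℝ} (hf : Continuous f) (b x : ℝ) :
    HasDerivAt (fun t => ∫ y in t..b, f y) (-(f x)) x := by
  have h := (hasDerivAt_int_right hf b x).neg
  refine h.congr_of_eventuallyEq (Filter.Eventually.of_forall fun t => ?_)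
  exact intervalIntegral.integral_symm b t

section

variable (L : ℝ) (hL : 0 < L) (ρ : ℝ → ℝ) (hρ : ContDiff ℝ 1 ρ)

lemma exp_prod_sub (x : ℝ) (hL : 0 < L) :
    Real.exp ((2 * Real.pi - x) / L) * Real.exp (x / L) = Real.exp (2 * Real.pi / L) := by
  rw [← Real.exp_add]; congr 1; field_simp; ring

lemma exp_prod_add (x : ℝ) (hL : 0 < L) :
    Real.exp ((2 * Real.pi + x) / L) * Real.exp (-x / L) = Real.exp (2 * Real.pi / L) := by
  rw [← Real.exp_add]; congr 1; field_simp; ring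

lemma exp_prod_self (x : ℝ) : Real.exp (x / L) * Real.exp (-x / L) = 1 := by
  rw [← Real.exp_add]; rw [show x / L + -x / L = 0 by ring, Real.exp_zero]

lemma hE (hL : 0 < L) : Real.exp (2 * Real.pi / L) - 1 ≠ 0 := by
  have h0 : (0:ℝ) < 2 * Real.pi / L := by positivity
  have h1 : Real.exp 0 < Real.exp (2 * Real.pi / L) := Real.exp_lt_exp.mpr h0
  rw [Real.exp_zero] at h1
  linarith

end

section main

variable {L : ℝ} {ρ : ℝ → ℝ}


lemma contP (L : ℝ) (hρ : ContDiff ℝ 1 ρ) : Continuous (fun y => Real.exp (y / L) * ρ y) :=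
  (Real.continuous_exp.comp (continuous_id.div_const L)).mul hρ.continuous

lemma contM (L : ℝ) (hρ : ContDiff ℝ 1 ρ) : Continuous (fun y => Real.exp (-y / L) * ρ y) :=
  (Real.continuous_exp.comp (continuous_id.neg.div_const L)).mul hρ.continuous

lemma e1 (L x : ℝ) : HasDerivAt (fun t => Real.exp ((2 * Real.pi - t) / L))
    (Real.exp ((2 * Real.pi - x) / L) * (-1 / L)) x := by
  have h : HasDerivAt (fun t : ℝ => (2 * Real.pi - t) / L) (-1 / L) x :=
    ((hasDerivAt_id x).const_sub _).div_const L
  exact h.exp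

lemma e2 (L x : ℝ) : HasDerivAt (fun t => Real.exp (t / L))
    (Real.exp (x / L) * (1 / L)) x := by
  have h : HasDerivAt (fun t : ℝ => t / L) (1 / L) x := (hasDerivAt_id x).div_const L
  exact h.exp

lemma e3 (L x : ℝ) : HasDerivAt (fun t => Real.exp ((2 * Real.pi + t) / L))
    (Real.exp ((2 * Real.pi + x) / L) * (1 / L)) x := by
  have h : HasDerivAt (fun t : ℝ => (2 * Real.pi + t) / L) (1 / L) x :=
    ((hasDerivAt_id x).const_add _).div_const L
  exact h.exp

lemma e4 (L x : ℝ) : HasDerivAt (fun t => Real.exp (-t / L))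
    (Real.exp (-x / L) * (-1 / L)) x := by
  have h : HasDerivAt (fun t : ℝ => -t / L) (-1 / L) x := ((hasDerivAt_id x).neg).div_const L
  exact h.exp

lemma phi_hasDerivAt (hL : 0 < L) (hρ : ContDiff ℝ 1 ρ) (x : ℝ) :
    HasDerivAt (phiConv L ρ) (phiD L ρ x) x := by
  have hA := hasDerivAt_int_right (contP L hρ) (-Real.pi) x
  have hB := hasDerivAt_int_right (contM L hρ) (-Real.pi) x
  have hC := hasDerivAt_int_left (contM L hρ) Real.pi x
  have hD := hasDerivAt_int_left (contP L hρ) Real.pi x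
  have h := ((((((e1 L x).mul hA).sub ((e2 L x).mul hB)).sub
      ((e3 L x).mul hC)).add ((e4 L x).mul hD)).const_mul
      (1 / (Real.exp (2 * Real.pi / L) - 1)))
  convert h using 1
  rotate_right
  have k1 := exp_prod_sub L x hL
  have k2 := exp_prod_add L x hL
  have kE := hE L hL
  have hL' : L ≠ 0 := ne_of_gt hL
  unfold phiD
  have k3 := exp_prod_self L x
  field_simp
  simp only [neg_div] at k2 k3 ⊢
  linear_combination (-(L * ρ x)) * k1 + (-(L * ρ x)) * k2 + (2 * L * ρ x) * k3
  all_goals rfl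

end main

/-- The deconvolution identity of Appendix B: `φ'' = φ/L² + 2ρ'` on `(-π, π)`. -/
theorem deconvolution_identity
    (L : ℝ) (hL : 0 < L) (ρ : ℝ → ℝ) (hρ : ContDiff ℝ 1 ρ) :
    (∀ x ∈ Set.Ioo (-Real.pi) Real.pi, DifferentiableAt ℝ (phiConv L ρ) x) ∧
    (∀ x ∈ Set.Ioo (-Real.pi) Real.pi,
      HasDerivAt (deriv (phiConv L ρ))
        (phiConv L ρ x / L ^ 2 + 2 * deriv ρ x) x) := by
  have hderiv : deriv (phiConv L ρ) = phiD L ρ :=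
    funext fun x => (phi_hasDerivAt hL hρ x).deriv
  constructor
  · exact fun x _ => (phi_hasDerivAt hL hρ x).differentiableAt
  · intro x _
    rw [hderiv]
    have hA := hasDerivAt_int_right (contP L hρ) (-Real.pi) x
    have hB := hasDerivAt_int_right (contM L hρ) (-Real.pi) x
    have hC := hasDerivAt_int_left (contM L hρ) Real.pi x
    have hD := hasDerivAt_int_left (contP L hρ) Real.pi x
    have hρ' : HasDerivAt ρ (deriv ρ x) x :=
      ((hρ.differentiable one_ne_zero) x).hasDerivAt
    have h := (((((((e1 L x).mul hA).add ((e2 L x).mul hB)).add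
        ((e3 L x).mul hC)).add ((e4 L x).mul hD)).const_mul (-(1 / L))).const_mul
        (1 / (Real.exp (2 * Real.pi / L) - 1))).add (hρ'.const_mul 2)
    have heq : phiD L ρ = fun t =>
        (1 / (Real.exp (2 * Real.pi / L) - 1)) * ((-(1 / L)) *
          (Real.exp ((2 * Real.pi - t) / L) * (∫ y in (-Real.pi)..t, Real.exp (y / L) * ρ y)
            + Real.exp (t / L) * (∫ y in (-Real.pi)..t, Real.exp (-y / L) * ρ y)
            + Real.exp ((2 * Real.pi + t) / L) * (∫ y in t..Real.pi, Real.exp (-y / L) * ρ y)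
            + Real.exp (-t / L) * (∫ y in t..Real.pi, Real.exp (y / L) * ρ y)))
        + 2 * ρ t := rfl
    rw [heq]
    convert h using 1
    rotate_right
    have k1 := exp_prod_sub L x hL
    have k2 := exp_prod_add L x hL
    have hL' : L ≠ 0 := ne_of_gt hL
    unfold phiConv
    have k3 := exp_prod_self L x
    field_simp
    simp only [neg_div] at k2 k3 ⊢
    linear_combination
      (L * ρ x * (-1 + Real.exp (2 * Real.pi / L))⁻¹) * (k1 - k2)
    all_goals rfl
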